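/- For every fair division instance with n agents that have additive objective valuations over a finite item set M = G ∪ C, if the agents value the goods identically (v_i(g) = v_j(g) for all agents i, j and every good g ∈ G), then there exists an EQx allocation. -/

import Mathlib

set_option linter.unusedSectionVars false
open scoped Classical

namespace EQxAux

variable {ι : Type*} [Fintype ι] [DecidableEq ι] {n : ℕ}

def valOf (v : Fin n → ι → ℤ) (f : ι → Fin n) (i : Fin n) : ℤ :=
  ∑ x ∈ Finset.univ.filter (fun x => f x = i), v i x

lemma valOf_eq (v : Fin n → ι → ℤ) (f : ι → Fin n) (i : Fin n) :
    valOf v f i = ∑ x : ι, if f x = i then v i x else 0 :=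
  Finset.sum_filter _ _

lemma valOf_update (v : Fin n → ι → ℤ) (f : ι → Fin n) (x : ι) (k i : Fin n) :
    valOf v (Function.update f x k) i
      = valOf v f i + (if k = i then v i x else 0) - (if f x = i then v i x else 0) := by
  rw [valOf_eq, valOf_eq]
  have h1 : (fun y => if Function.update f x k y = i then v i y else 0)
      = Function.update (fun y => if f y = i then v i y else 0) x
          (if k = i then v i x else 0) := by
    funext y
    by_cases hy : y = x
    · subst hy; simp
    · simp [Function.update_of_ne hy]
  rw [h1, Finset.sum_update_of_mem (Finset.mem_univ x),
    Finset.sum_eq_sum_sdiff_singleton_add (Finset.mem_univ x)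
      (fun y => if f y = i then v i y else 0)]
  ring

lemma sum_two_point {F F' : Fin n → ℤ} {j m : Fin n} (hjm : j ≠ m)
    (h : ∀ a, a ≠ j → a ≠ m → F' a = F a) :
    ∑ a, F' a = ∑ a, F a + (F' j - F j) + (F' m - F m) := by
  have key : ∑ a, (F' a - F a) = ∑ a ∈ ({j, m} : Finset (Fin n)), (F' a - F a) := by
    refine (Finset.sum_subset (Finset.subset_univ _) ?_).symm
    intro a _ ha
    simp only [Finset.mem_insert, Finset.mem_singleton] at ha
    push_neg at ha
    rw [h a ha.1 ha.2]; ring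
  rw [Finset.sum_pair hjm, Finset.sum_sub_distrib] at key
  linarith

section Pot

variable [NeZero n] (v : Fin n → ι → ℤ) (G C : Finset ι)

noncomputable def maxVal (f : ι → Fin n) : ℤ :=
  Finset.univ.sup' Finset.univ_nonempty (valOf v f)

lemma le_maxVal (f : ι → Fin n) (a : Fin n) : valOf v f a ≤ maxVal v f :=
  Finset.le_sup' _ (Finset.mem_univ a)

lemma exists_maxVal (f : ι → Fin n) : ∃ a, maxVal v f = valOf v f a := by
  obtain ⟨a, -, ha⟩ := Finset.exists_mem_eq_sup' Finset.univ_nonempty (valOf v f)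
  exact ⟨a, ha⟩

noncomputable def multVal (f : ι → Fin n) : ℕ :=
  (Finset.univ.filter (fun i => valOf v f i = maxVal v f)).card

noncomputable def sumVal (f : ι → Fin n) : ℤ := ∑ i, valOf v f i

noncomputable def sumSq (f : ι → Fin n) : ℤ := ∑ i, (valOf v f i) ^ 2

/-- A "bad pair": item `p.1` whose holder `f p.1`, after removing `p.1`,
is still strictly above agent `p.2` (good case) resp. strictly below (chore case). -/
def BadP (f : ι → Fin n) (p : ι × Fin n) : Prop :=
  (p.1 ∈ G ∧ valOf v f p.2 < valOf v f (f p.1) - v (f p.1) p.1) ∨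
  (p.1 ∈ C ∧ valOf v f (f p.1) - v (f p.1) p.1 < valOf v f p.2)

noncomputable def badCount (f : ι → Fin n) : ℕ :=
  (Finset.univ.filter (BadP v G C f)).card

noncomputable def pot (f : ι → Fin n) : ℤ ×ₗ (ℕ ×ₗ (ℤ ×ₗ (ℤ ×ₗ ℕ))) :=
  toLex (maxVal v f,
    toLex (multVal v f, toLex (-(sumVal v f), toLex (sumSq v f, badCount v G C f))))

lemma pot_lt₁ {f f' : ι → Fin n} (h : maxVal v f' < maxVal v f) :
    pot v G C f' < pot v G C f := by
  rw [pot, pot, Prod.Lex.lt_iff]; exact Or.inl h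

lemma pot_lt₂ {f f' : ι → Fin n} (h1 : maxVal v f' = maxVal v f)
    (h : multVal v f' < multVal v f) : pot v G C f' < pot v G C f := by
  rw [pot, pot, Prod.Lex.lt_iff]
  exact Or.inr ⟨h1, by rw [Prod.Lex.lt_iff]; exact Or.inl h⟩

lemma pot_lt₃ {f f' : ι → Fin n} (h1 : maxVal v f' = maxVal v f)
    (h2 : multVal v f' = multVal v f) (h : sumVal v f < sumVal v f') :
    pot v G C f' < pot v G C f := by
  rw [pot, pot, Prod.Lex.lt_iff]
  refine Or.inr ⟨h1, ?_⟩
  rw [Prod.Lex.lt_iff]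
  exact Or.inr ⟨h2, by rw [Prod.Lex.lt_iff]; exact Or.inl (show -(sumVal v f') < -(sumVal v f) by omega)⟩

lemma pot_lt₄ {f f' : ι → Fin n} (h1 : maxVal v f' = maxVal v f)
    (h2 : multVal v f' = multVal v f) (h3 : sumVal v f' = sumVal v f)
    (h : sumSq v f' < sumSq v f) : pot v G C f' < pot v G C f := by
  rw [pot, pot, Prod.Lex.lt_iff]
  refine Or.inr ⟨h1, ?_⟩
  rw [Prod.Lex.lt_iff]
  refine Or.inr ⟨h2, ?_⟩
  rw [Prod.Lex.lt_iff]
  exact Or.inr ⟨by rw [h3]; rfl, by rw [Prod.Lex.lt_iff]; exact Or.inl h⟩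

lemma pot_lt₅ {f f' : ι → Fin n} (h1 : maxVal v f' = maxVal v f)
    (h2 : multVal v f' = multVal v f) (h3 : sumVal v f' = sumVal v f)
    (h4 : sumSq v f' = sumSq v f) (h : badCount v G C f' < badCount v G C f) :
    pot v G C f' < pot v G C f := by
  rw [pot, pot, Prod.Lex.lt_iff]
  refine Or.inr ⟨h1, ?_⟩
  rw [Prod.Lex.lt_iff]
  refine Or.inr ⟨h2, ?_⟩
  rw [Prod.Lex.lt_iff]
  refine Or.inr ⟨by rw [h3]; rfl, ?_⟩
  rw [Prod.Lex.lt_iff]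
  exact Or.inr ⟨h4, h⟩

/-- Scenario A: some agent `j` at the old maximum strictly drops, nobody new reaches
the old maximum, and all new values stay at most the old maximum. -/
lemma pot_lt_top {f f' : ι → Fin n} (j : Fin n)
    (hle : ∀ a, valOf v f' a ≤ maxVal v f)
    (hsub : ∀ a, valOf v f' a = maxVal v f → valOf v f a = maxVal v f)
    (hj : valOf v f j = maxVal v f) (hj' : valOf v f' j < maxVal v f) :
    pot v G C f' < pot v G C f := by
  have hM' : maxVal v f' ≤ maxVal v f := Finset.sup'_le _ _ (fun a _ => hle a)
  rcases lt_or_eq_of_le hM' with hlt | heq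
  · exact pot_lt₁ v G C hlt
  · refine pot_lt₂ v G C heq ?_
    apply Finset.card_lt_card
    rw [Finset.ssubset_iff_of_subset]
    · refine ⟨j, ?_, ?_⟩
      · simp only [Finset.mem_filter, Finset.mem_univ, true_and]; exact hj
      · simp only [Finset.mem_filter, Finset.mem_univ, true_and, heq]
        exact fun h => absurd h (ne_of_lt hj')
    · intro a ha
      simp only [Finset.mem_filter, Finset.mem_univ, true_and, heq] at ha ⊢
      exact hsub a ha

/-- If all values are unchanged, the first four components of the potential agree. -/
lemma comps_eq {f f' : ι → Fin n} (hvv : valOf v f' = valOf v f) :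
    maxVal v f' = maxVal v f ∧ multVal v f' = multVal v f ∧
      sumVal v f' = sumVal v f ∧ sumSq v f' = sumSq v f := by
  refine ⟨?_, ?_, ?_, ?_⟩ <;> simp only [maxVal, multVal, sumVal, sumSq, hvv] <;> rfl

/-- Scenario for zero-valued items: values unchanged, item `x` moved to a place where it
causes no badness, while it was bad before. -/
lemma badCount_lt {f : ι → Fin n} {x : ι} {k : Fin n}
    (hvv : valOf v (Function.update f x k) = valOf v f)
    (hnew : ∀ a, ¬ BadP v G C (Function.update f x k) (x, a))
    {j₀ : Fin n} (hold : BadP v G C f (x, j₀)) :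
    badCount v G C (Function.update f x k) < badCount v G C f := by
  set f' := Function.update f x k with hf'
  apply Finset.card_lt_card
  rw [Finset.ssubset_iff_of_subset]
  · refine ⟨(x, j₀), ?_, ?_⟩
    · simp only [Finset.mem_filter, Finset.mem_univ, true_and]; exact hold
    · simp only [Finset.mem_filter, Finset.mem_univ, true_and]
      exact hnew j₀
  · intro p hp
    simp only [Finset.mem_filter, Finset.mem_univ, true_and] at hp ⊢
    by_cases hpx : p.1 = x
    · obtain ⟨y, a⟩ := p
      simp only at hpx
      subst hpx
      exact absurd hp (hnew a)
    · have hfp : f' p.1 = f p.1 := Function.update_of_ne hpx _ _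
      unfold BadP at hp ⊢
      rw [hfp, hvv] at hp
      exact hp

end Pot

end EQxAux




/-- An allocation: pairwise disjoint bundles covering all the items. -/
def IsAllocation {ι : Type*} {n : ℕ} (A : Fin n → Finset ι) : Prop :=
  (∀ i j : Fin n, i ≠ j → Disjoint (A i) (A j)) ∧ ∀ x : ι, ∃ i : Fin n, x ∈ A i

/-- EQx for additive objective valuations, where `G` is the set of goods and `C` the set of
chores: for all agents `i, j`, removing any good from `A j` brings `j`'s value down to at most
`i`'s value, and removing any chore from `A i` raises `i`'s value to at least `j`'s value. -/
def IsEQxObj {ι : Type*} [DecidableEq ι] {n : ℕ} (G C : Finset ι) (v : Fin n → ι → ℤ)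
    (A : Fin n → Finset ι) : Prop :=
  ∀ i j : Fin n,
    (∀ g ∈ A j ∩ G, (∑ x ∈ A j, v j x) - v j g ≤ ∑ x ∈ A i, v i x) ∧
    (∀ c ∈ A i ∩ C, (∑ x ∈ A i, v i x) - v i c ≥ ∑ x ∈ A j, v j x)


theorem eqx_exists_identical_goods
    {ι : Type*} [Fintype ι] [DecidableEq ι] {n : ℕ} (hn : 0 < n)
    (G C : Finset ι) (hGC : G ∪ C = Finset.univ) (hdisj : Disjoint G C)
    (v : Fin n → ι → ℤ)
    (hG : ∀ g ∈ G, ∀ i : Fin n, 0 ≤ v i g) (hC : ∀ c ∈ C, ∀ i : Fin n, v i c ≤ 0)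
    (hident : ∀ g ∈ G, ∀ i j : Fin n, v i g = v j g) :
    ∃ A : Fin n → Finset ι, IsAllocation A ∧ IsEQxObj G C v A := by
  classical
  haveI : NeZero n := ⟨hn.ne'⟩
  obtain ⟨f₀, -, hmin⟩ := Finset.exists_min_image (Finset.univ : Finset (ι → Fin n))
    (EQxAux.pot v G C) ⟨fun _ => ⟨0, hn⟩, Finset.mem_univ _⟩
  have hmin' : ∀ f' : ι → Fin n, ¬ (EQxAux.pot v G C f' < EQxAux.pot v G C f₀) :=
    fun f' hlt => absurd hlt (not_lt.mpr (hmin f' (Finset.mem_univ _)))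
  have hMle : ∀ a, EQxAux.valOf v f₀ a ≤ EQxAux.maxVal v f₀ :=
    fun a => EQxAux.le_maxVal v f₀ a
  refine ⟨fun i => Finset.univ.filter (fun x => f₀ x = i), ⟨?_, fun x => ⟨f₀ x, by simp⟩⟩, ?_⟩
  · intro i j hij
    rw [Finset.disjoint_left]
    intro x hx hx'
    simp only [Finset.mem_filter] at hx hx'
    exact hij (hx.2.symm.trans hx'.2)
  · intro i j
    constructor
    · -- goods condition
      intro g hg
      rw [Finset.mem_inter] at hg
      obtain ⟨hgA, hgG⟩ := hg
      have hfg : f₀ g = j := (Finset.mem_filter.mp hgA).2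
      show EQxAux.valOf v f₀ j - v j g ≤ EQxAux.valOf v f₀ i
      by_contra hbad
      push_neg at hbad
      obtain ⟨m, -, hm⟩ := Finset.exists_min_image (Finset.univ : Finset (Fin n))
        (EQxAux.valOf v f₀) ⟨i, Finset.mem_univ i⟩
      have hmle : ∀ a, EQxAux.valOf v f₀ m ≤ EQxAux.valOf v f₀ a :=
        fun a => hm a (Finset.mem_univ a)
      have hw0 : 0 ≤ v j g := hG g hgG j
      have hmj : EQxAux.valOf v f₀ m + v j g < EQxAux.valOf v f₀ j := by
        have := hmle i; linarith
      have hjm : j ≠ m := by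
        intro h
        have h2 := hG g hgG m
        rw [h] at hmj
        linarith
      set f' := Function.update f₀ g m with hf'
      have hvj : EQxAux.valOf v f' j = EQxAux.valOf v f₀ j - v j g := by
        rw [hf', EQxAux.valOf_update, if_neg (Ne.symm hjm), if_pos hfg]; ring
      have hvm : EQxAux.valOf v f' m = EQxAux.valOf v f₀ m + v j g := by
        rw [hf', EQxAux.valOf_update, if_pos rfl, if_neg (by rw [hfg]; exact hjm),
          hident g hgG m j]
        ring
      have hvo : ∀ a, a ≠ j → a ≠ m → EQxAux.valOf v f' a = EQxAux.valOf v f₀ a := by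
        intro a haj ham
        rw [hf', EQxAux.valOf_update, if_neg (Ne.symm ham), if_neg (by rw [hfg]; exact Ne.symm haj)]
        ring
      rcases lt_or_eq_of_le hw0 with hwpos | hwzero
      · -- positive-valued good
        by_cases htop : EQxAux.valOf v f₀ j = EQxAux.maxVal v f₀
        · -- holder j is at the maximum : scenario top
          refine hmin' f' (EQxAux.pot_lt_top v G C j ?_ ?_ htop ?_)
          · intro a
            by_cases haj : a = j
            · rw [haj, hvj]; linarith
            · by_cases ham : a = m
              · rw [ham, hvm]; linarith [htop]
              · rw [hvo a haj ham]; exact hMle a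
          · intro a ha
            by_cases haj : a = j
            · exfalso; rw [haj, hvj] at ha; rw [htop] at *; linarith
            · by_cases ham : a = m
              · exfalso; rw [ham, hvm] at ha; linarith [htop.le, hmj, hMle j]
              · rw [← hvo a haj ham]; exact ha
          · rw [hvj]; linarith [htop.ge]
        · -- holder j below the maximum : Robin Hood transfer, sum of squares drops
          have hjM : EQxAux.valOf v f₀ j < EQxAux.maxVal v f₀ :=
            lt_of_le_of_ne (hMle j) htop
          obtain ⟨K, hK⟩ := EQxAux.exists_maxVal v f₀
          have hKj : K ≠ j := by intro h; rw [h] at hK; exact htop hK.symm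
          have hKm : K ≠ m := by
            intro h; rw [h] at hK
            have := hmle j; linarith
          have hle' : ∀ a, EQxAux.valOf v f' a ≤ EQxAux.maxVal v f₀ := by
            intro a
            by_cases haj : a = j
            · rw [haj, hvj]; linarith
            · by_cases ham : a = m
              · rw [ham, hvm]; linarith
              · rw [hvo a haj ham]; exact hMle a
          have hM'eq : EQxAux.maxVal v f' = EQxAux.maxVal v f₀ := by
            refine le_antisymm (Finset.sup'_le _ _ fun a _ => hle' a) ?_
            have h1 := EQxAux.le_maxVal v f' K
            rw [hvo K hKj hKm] at h1
            rw [hK]; exact h1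
          have hmult : EQxAux.multVal v f' = EQxAux.multVal v f₀ := by
            unfold EQxAux.multVal
            rw [hM'eq]
            congr 1
            apply Finset.filter_congr
            intro a _
            by_cases haj : a = j
            · rw [haj, hvj]
              constructor <;> intro h <;> exfalso <;> linarith
            · by_cases ham : a = m
              · rw [ham, hvm]
                constructor <;> intro h <;> exfalso <;> [skip; skip] <;> nlinarith [hmle j]
              · rw [hvo a haj ham]
          have hsum : EQxAux.sumVal v f' = EQxAux.sumVal v f₀ := by
            unfold EQxAux.sumVal
            rw [EQxAux.sum_two_point hjm hvo, hvj, hvm]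
            ring
          have hsq : EQxAux.sumSq v f' < EQxAux.sumSq v f₀ := by
            unfold EQxAux.sumSq
            rw [EQxAux.sum_two_point (F := fun a => (EQxAux.valOf v f₀ a) ^ 2)
              (F' := fun a => (EQxAux.valOf v f' a) ^ 2) hjm
              (fun a h1 h2 => by simp only [hvo a h1 h2]), hvj, hvm]
            nlinarith [mul_pos hwpos (show (0:ℤ) <
              EQxAux.valOf v f₀ j - EQxAux.valOf v f₀ m - v j g by linarith)]
          exact hmin' f' (EQxAux.pot_lt₄ v G C hM'eq hmult hsum hsq)
      · -- zero-valued good : move it to a minimum agent, bad-pair count drops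
        have hveq : EQxAux.valOf v f' = EQxAux.valOf v f₀ := by
          funext a
          by_cases haj : a = j
          · rw [haj, hvj, ← hwzero]; ring
          · by_cases ham : a = m
            · rw [ham, hvm, ← hwzero]; ring
            · exact hvo a haj ham
        obtain ⟨e1, e2, e3, e4⟩ := EQxAux.comps_eq v (f := f₀) (f' := f') hveq
        refine hmin' f' (EQxAux.pot_lt₅ v G C e1 e2 e3 e4 ?_)
        refine EQxAux.badCount_lt v G C (by rw [← hf']; exact hveq) ?_
          (j₀ := i) (Or.inl ⟨hgG, by rw [hfg]; exact hbad⟩)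
        intro a hBad
        unfold EQxAux.BadP at hBad
        rcases hBad with ⟨-, hlt⟩ | ⟨hC', -⟩
        · simp only [Function.update_self] at hlt
          rw [← hf'] at hlt
          rw [hveq] at hlt
          have hvmg : v m g = 0 := by rw [hident g hgG m j, ← hwzero]
          rw [hvmg] at hlt
          have := hmle a
          linarith
        · exact absurd hC' (fun hc => (Finset.disjoint_left.mp hdisj hgG) hc)
    · -- chores condition
      intro c hc
      rw [Finset.mem_inter] at hc
      obtain ⟨hcA, hcC⟩ := hc
      have hfc : f₀ c = i := (Finset.mem_filter.mp hcA).2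
      show EQxAux.valOf v f₀ i - v i c ≥ EQxAux.valOf v f₀ j
      by_contra hbad
      push_neg at hbad
      obtain ⟨K, hK⟩ := EQxAux.exists_maxVal v f₀
      have hjM : EQxAux.valOf v f₀ j ≤ EQxAux.maxVal v f₀ := hMle j
      have hic0 : v i c ≤ 0 := hC c hcC i
      have hiK : i ≠ K := by
        intro h; rw [← h] at hK
        have := hMle j
        linarith [hK.ge]
      set f' := Function.update f₀ c K with hf'
      have hvi : EQxAux.valOf v f' i = EQxAux.valOf v f₀ i - v i c := by
        rw [hf', EQxAux.valOf_update, if_neg (Ne.symm hiK), if_pos hfc]; ring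
      have hvK : EQxAux.valOf v f' K = EQxAux.valOf v f₀ K + v K c := by
        rw [hf', EQxAux.valOf_update, if_pos rfl, if_neg (by rw [hfc]; exact hiK)]; ring
      have hvo : ∀ a, a ≠ i → a ≠ K → EQxAux.valOf v f' a = EQxAux.valOf v f₀ a := by
        intro a hai haK
        rw [hf', EQxAux.valOf_update, if_neg (Ne.symm haK), if_neg (by rw [hfc]; exact Ne.symm hai)]
        ring
      by_cases hKc : v K c < 0
      · -- a maximum agent strictly dislikes the chore : scenario top
        refine hmin' f' (EQxAux.pot_lt_top v G C K ?_ ?_ hK.symm ?_)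
        · intro a
          by_cases hai : a = i
          · rw [hai, hvi]; linarith
          · by_cases haK : a = K
            · rw [haK, hvK]; linarith [hK.ge]
            · rw [hvo a hai haK]; exact hMle a
        · intro a ha
          by_cases hai : a = i
          · exfalso; rw [hai, hvi] at ha; linarith
          · by_cases haK : a = K
            · exfalso; rw [haK, hvK] at ha; linarith [hK.ge]
            · rw [← hvo a hai haK]; exact ha
        · rw [hvK]; linarith [hK.ge]
      · have hKc0 : v K c = 0 := le_antisymm (hC c hcC K) (not_lt.mp hKc)
        by_cases hicneg : v i c < 0
        · -- holder strictly dislikes the chore, max agent is indifferent : total value rises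
          have hle' : ∀ a, EQxAux.valOf v f' a ≤ EQxAux.maxVal v f₀ := by
            intro a
            by_cases hai : a = i
            · rw [hai, hvi]; linarith
            · by_cases haK : a = K
              · rw [haK, hvK, hKc0]; linarith [hK.ge]
              · rw [hvo a hai haK]; exact hMle a
          have hM'eq : EQxAux.maxVal v f' = EQxAux.maxVal v f₀ := by
            refine le_antisymm (Finset.sup'_le _ _ fun a _ => hle' a) ?_
            have h1 := EQxAux.le_maxVal v f' K
            rw [hvK, hKc0] at h1
            rw [hK]; linarith
          have hmult : EQxAux.multVal v f' = EQxAux.multVal v f₀ := by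
            unfold EQxAux.multVal
            rw [hM'eq]
            congr 1
            apply Finset.filter_congr
            intro a _
            by_cases hai : a = i
            · rw [hai, hvi]
              constructor <;> intro h <;> exfalso <;> linarith
            · by_cases haK : a = K
              · rw [haK, hvK, hKc0]
                constructor <;> intro h <;> linarith
              · rw [hvo a hai haK]
          have hsum : EQxAux.sumVal v f₀ < EQxAux.sumVal v f' := by
            unfold EQxAux.sumVal
            rw [EQxAux.sum_two_point hiK hvo, hvi, hvK, hKc0]
            linarith
          exact hmin' f' (EQxAux.pot_lt₃ v G C hM'eq hmult hsum)
        · -- both holder and max agent value the chore at zero : bad-pair count drops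
          have hic0' : v i c = 0 := le_antisymm hic0 (not_lt.mp hicneg)
          have hveq : EQxAux.valOf v f' = EQxAux.valOf v f₀ := by
            funext a
            by_cases hai : a = i
            · rw [hai, hvi, hic0']; ring
            · by_cases haK : a = K
              · rw [haK, hvK, hKc0]; ring
              · exact hvo a hai haK
          obtain ⟨e1, e2, e3, e4⟩ := EQxAux.comps_eq v (f := f₀) (f' := f') hveq
          refine hmin' f' (EQxAux.pot_lt₅ v G C e1 e2 e3 e4 ?_)
          refine EQxAux.badCount_lt v G C (by rw [← hf']; exact hveq) ?_
            (j₀ := j) (Or.inr ⟨hcC, by rw [hfc]; exact hbad⟩)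
          intro a hBad
          unfold EQxAux.BadP at hBad
          rcases hBad with ⟨hG', -⟩ | ⟨-, hlt⟩
          · exact (Finset.disjoint_left.mp hdisj hG') hcC
          · simp only [Function.update_self] at hlt
            rw [← hf'] at hlt
            rw [hveq, hKc0] at hlt
            have := hMle a
            linarith [hK.ge]
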